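/- arXiv:2407.00618 — 4 statements merged into one kernel-verified Lean document; each statement's English description precedes it below -/
import Mathlib

section
/- Let (g,[·,·]) be a Super-Lie superalgebra of parity p and let R : g → g be a homogeneous linear map of parity r that is a left Rota-Baxter operator, i.e. [R(x),R(y)] = R([R(x),y] + (-1)^{r(|y|+r+p)}[x,R(y)]) for all homogeneous x,y. Then the product x▷y := [R(x),y] defines a super-left-symmetric superalgebra structure of parity r+p on g: ass_▷(x,y,z) = (-1)^{(|x|+r+p)(|y|+r+p)} ass_▷(y,x,z). -/
/-- The sign `(-1)^e` for `e : ZMod 2`. -/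
def pm (K : Type*) [Field K] (e : ZMod 2) : K := (-1 : K) ^ e.val

lemma pm_add (K : Type*) [Field K] (a b : ZMod 2) :
    pm K (a + b) = pm K a * pm K b := by
  simp only [pm]
  rw [← pow_add, ZMod.val_add, ← neg_one_pow_eq_pow_mod_two]

/-- if `R` is a left Rota-Baxter operator of parity `r` on a Super-Lie
superalgebra of parity `p`, then `x ▷ y := [R x, y]` is super-left-symmetric of parity
`r + p`. -/
theorem stmt_6 (K V : Type*) [Field K] [AddCommGroup V] [Module K V]
    (G : ZMod 2 → Submodule K V) (p : ZMod 2) (m : V →ₗ[K] V →ₗ[K] V)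
    (hgrad : ∀ i j : ZMod 2, ∀ x ∈ G i, ∀ y ∈ G j, m x y ∈ G (i + j + p))
    (hskew : ∀ i j : ZMod 2, ∀ x ∈ G i, ∀ y ∈ G j,
      m x y = (-(pm K ((i + p) * (j + p)))) • m y x)
    (hjac : ∀ i j k : ZMod 2, ∀ x ∈ G i, ∀ y ∈ G j, ∀ z ∈ G k,
      m x (m y z) = m (m x y) z + pm K ((i + p) * (j + p)) • m y (m x z))
    (r : ZMod 2) (R : V →ₗ[K] V)
    (hRg : ∀ i : ZMod 2, ∀ x ∈ G i, R x ∈ G (i + r))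
    (hRB : ∀ i j : ZMod 2, ∀ x ∈ G i, ∀ y ∈ G j,
      m (R x) (R y) = R (m (R x) y + pm K (r * (j + r + p)) • m x (R y))) :
    ∀ i j k : ZMod 2, ∀ x ∈ G i, ∀ y ∈ G j, ∀ z ∈ G k,
      m (R (m (R x) y)) z - m (R x) (m (R y) z)
        = pm K ((i + r + p) * (j + r + p)) •
            (m (R (m (R y) x)) z - m (R y) (m (R x) z)) := by
  intro i j k x hx y hy z hz
  have h1 := hjac (i + r) (j + r) k (R x) (hRg i x hx) (R y) (hRg j y hy) z hz
  have h2 := hRB i j x hx y hy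
  have h3 := hskew i (j + r) x hx (R y) (hRg j y hy)
  have heq : (i + r + p) * (j + r + p) = (i + r + p) * (j + r + p) := rfl
  have harg : (i + r + p) * (j + r + p)
      = r * (j + r + p) + (i + p) * (j + r + p) := by ring
  have hs : pm K ((i + r + p) * (j + r + p))
      = pm K (r * (j + r + p)) * pm K ((i + p) * (j + r + p)) := by
    rw [harg, pm_add]
  have he : (i + r + p) * (j + r + p) = (i + r + p) * (j + r + p) := rfl
  have hexp : (i + r + p) * (j + r + p) = (j + r + p) * (i + r + p) := by ring
  rw [h1, h2, h3]
  simp only [map_add, map_smul, map_neg, LinearMap.add_apply, LinearMap.smul_apply,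
    LinearMap.neg_apply, smul_add, smul_neg, smul_smul, neg_smul]
  have hje : (i + r + p) * (j + r + p) = (j + r + p) * (i + r + p) := by ring
  rw [← hs]
  abel_nf
  module
end

section
/- Let (g,[·,·]) be a Super-Lie superalgebra of parity p and let R : g → g be a homogeneous linear map of parity r that is a right Rota-Baxter operator, i.e. [R(x),R(y)] = R((-1)^{r(|x|+r+p)}[R(x),y] + [x,R(y)]) for all homogeneous x,y. Then the product x◁y := [x,R(y)] defines a super-right-symmetric superalgebra structure of parity r+p on g: ass_◁(x,y,z) = (-1)^{(|y|+r+p)(|z|+r+p)} ass_◁(x,z,y). -/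
lemma pm_mul_pm (K : Type*) [Field K] (a b : ZMod 2) :
    pm K a * pm K b = pm K (a + b) := by
  fin_cases a <;> fin_cases b <;>
    simp [pm, show ((0 : ZMod 2) + 0 : ZMod 2) = 0 from rfl,
      show ((0 : ZMod 2) + 1 : ZMod 2) = 1 from rfl,
      show ((1 : ZMod 2) + 0 : ZMod 2) = 1 from rfl,
      show ((1 : ZMod 2) + 1 : ZMod 2) = 0 from rfl,
      show ZMod.val (0 : ZMod 2) = 0 from rfl,
      show ZMod.val (1 : ZMod 2) = 1 from rfl] <;>
    rw [← pow_add, neg_one_pow_eq_pow_mod_two] <;> rfl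

/-- if `R` is a right Rota-Baxter operator of parity `r` on a Super-Lie
superalgebra of parity `p`, then `x ◁ y := [x, R y]` is super-right-symmetric of parity
`r + p`. -/
theorem stmt_7 (K V : Type*) [Field K] [AddCommGroup V] [Module K V]
    (G : ZMod 2 → Submodule K V) (p : ZMod 2) (m : V →ₗ[K] V →ₗ[K] V)
    (hgrad : ∀ i j : ZMod 2, ∀ x ∈ G i, ∀ y ∈ G j, m x y ∈ G (i + j + p))
    (hskew : ∀ i j : ZMod 2, ∀ x ∈ G i, ∀ y ∈ G j,
      m x y = (-(pm K ((i + p) * (j + p)))) • m y x)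
    (hjac : ∀ i j k : ZMod 2, ∀ x ∈ G i, ∀ y ∈ G j, ∀ z ∈ G k,
      m (m x y) z = m x (m y z) + pm K ((j + p) * (k + p)) • m (m x z) y)
    (r : ZMod 2) (R : V →ₗ[K] V)
    (hRg : ∀ i : ZMod 2, ∀ x ∈ G i, R x ∈ G (i + r))
    (hRB : ∀ i j : ZMod 2, ∀ x ∈ G i, ∀ y ∈ G j,
      m (R x) (R y) = R (pm K (r * (i + r + p)) • m (R x) y + m x (R y))) :
    ∀ i j k : ZMod 2, ∀ x ∈ G i, ∀ y ∈ G j, ∀ z ∈ G k,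
      m (m x (R y)) (R z) - m x (R (m y (R z)))
        = pm K ((j + r + p) * (k + r + p)) •
            (m (m x (R z)) (R y) - m x (R (m z (R y)))) := by
  intro i j k x hx y hy z hz
  have hRy := hRg j y hy
  have hRz := hRg k z hz
  have key : pm K (r * (j + r + p)) * (-(pm K ((j + r + p) * (k + p))))
      = -(pm K ((j + r + p) * (k + r + p))) := by
    rw [mul_neg, pm_mul_pm,
      show r * (j + r + p) + (j + r + p) * (k + p) = (j + r + p) * (k + r + p) from by ring]
  rw [hjac i (j + r) (k + r) x hx (R y) hRy (R z) hRz, hRB j k y hy z hz,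
    hskew (j + r) k (R y) hRy z hz]
  simp only [map_add, map_smul, smul_smul, smul_sub]
  rw [key]
  module
end

section
/- Let D be a homogeneous invertible linear map on a Super-Lie superalgebra (g,[·,·]) of parity p, with inverse of the same parity. Then D is a left derivation (D[x,y] = [D(x),y] + (-1)^{|D|(|x|+p)}[x,D(y)]) if and only if D^{-1} is a right Rota-Baxter operator: [D^{-1}(X), D^{-1}(Y)] = D^{-1}([X, D^{-1}(Y)] + (-1)^{|D|(|D|+|X|+p)}[D^{-1}(X), Y]) for all homogeneous X,Y. -/
/-- a homogeneous invertible linear map `D` of parity `d` on a Super-Lie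
superalgebra of parity `p` is a left derivation iff its inverse `E = D⁻¹` is a right
Rota-Baxter operator. -/
theorem stmt_15 (K V : Type*) [Field K] [AddCommGroup V] [Module K V]
    (G : ZMod 2 → Submodule K V) (p : ZMod 2) (m : V →ₗ[K] V →ₗ[K] V)
    (hgrad : ∀ i j : ZMod 2, ∀ x ∈ G i, ∀ y ∈ G j, m x y ∈ G (i + j + p))
    (hskew : ∀ i j : ZMod 2, ∀ x ∈ G i, ∀ y ∈ G j,
      m x y = (-(pm K ((i + p) * (j + p)))) • m y x)
    (hjac : ∀ i j k : ZMod 2, ∀ x ∈ G i, ∀ y ∈ G j, ∀ z ∈ G k,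
      m x (m y z) = m (m x y) z + pm K ((i + p) * (j + p)) • m y (m x z))
    (d : ZMod 2) (D E : V →ₗ[K] V)
    (hED : E ∘ₗ D = LinearMap.id) (hDE : D ∘ₗ E = LinearMap.id)
    (hDg : ∀ i : ZMod 2, ∀ x ∈ G i, D x ∈ G (i + d))
    (hEg : ∀ i : ZMod 2, ∀ x ∈ G i, E x ∈ G (i + d)) :
    (∀ i j : ZMod 2, ∀ x ∈ G i, ∀ y ∈ G j,
        D (m x y) = m (D x) y + pm K (d * (i + p)) • m x (D y))
    ↔
    (∀ i j : ZMod 2, ∀ X ∈ G i, ∀ Y ∈ G j,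
        m (E X) (E Y) = E (m X (E Y) + pm K (d * (d + i + p)) • m (E X) Y)) := by
  have hDE' : ∀ v, D (E v) = v := fun v => LinearMap.congr_fun hDE v
  have hED' : ∀ v, E (D v) = v := fun v => LinearMap.congr_fun hED v
  have h2 : ∀ a : ZMod 2, a + a = 0 := by decide
  constructor
  · intro hder i j X hX Y hY
    have key := hder (i + d) (j + d) (E X) (hEg i X hX) (E Y) (hEg j Y hY)
    rw [hDE', hDE'] at key
    have hexp : d * (i + d + p) = d * (d + i + p) := by ring
    rw [hexp] at key
    calc m (E X) (E Y) = E (D (m (E X) (E Y))) := (hED' _).symm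
      _ = E (m X (E Y) + pm K (d * (d + i + p)) • m (E X) Y) := by rw [key]
  · intro hrb i j x hx y hy
    have key := hrb (i + d) (j + d) (D x) (hDg i x hx) (D y) (hDg j y hy)
    rw [hED', hED'] at key
    have hexp : d * (d + (i + d) + p) = d * (i + p) := by
      linear_combination d * h2 d
    rw [hexp] at key
    have := congrArg D key
    rw [hDE'] at this
    rw [this]
end

section
/- Let D be a homogeneous invertible linear map on a Super-Lie superalgebra (g,[·,·]) of parity p. Then D is a right derivation (D[x,y] = [x,D(y)] + (-1)^{|D|(|y|+p)}[D(x),y]) if and only if D^{-1} is a left Rota-Baxter operator of parity |D|: [D^{-1}(X),D^{-1}(Y)] = D^{-1}([D^{-1}(X),Y] + (-1)^{|D|(|Y|+|D|+p)}[X,D^{-1}(Y)]) for all homogeneous X,Y. -/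
/-- a homogeneous invertible linear map `D` of parity `d` on a Super-Lie
superalgebra of parity `p` is a right derivation iff its inverse `E = D⁻¹` is a left
Rota-Baxter operator of parity `d`. -/
theorem stmt_16 (K V : Type*) [Field K] [AddCommGroup V] [Module K V]
    (G : ZMod 2 → Submodule K V) (p : ZMod 2) (m : V →ₗ[K] V →ₗ[K] V)
    (hgrad : ∀ i j : ZMod 2, ∀ x ∈ G i, ∀ y ∈ G j, m x y ∈ G (i + j + p))
    (hskew : ∀ i j : ZMod 2, ∀ x ∈ G i, ∀ y ∈ G j,
      m x y = (-(pm K ((i + p) * (j + p)))) • m y x)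
    (hjac : ∀ i j k : ZMod 2, ∀ x ∈ G i, ∀ y ∈ G j, ∀ z ∈ G k,
      m x (m y z) = m (m x y) z + pm K ((i + p) * (j + p)) • m y (m x z))
    (d : ZMod 2) (D E : V →ₗ[K] V)
    (hED : E ∘ₗ D = LinearMap.id) (hDE : D ∘ₗ E = LinearMap.id)
    (hDg : ∀ i : ZMod 2, ∀ x ∈ G i, D x ∈ G (i + d))
    (hEg : ∀ i : ZMod 2, ∀ x ∈ G i, E x ∈ G (i + d)) :
    (∀ i j : ZMod 2, ∀ x ∈ G i, ∀ y ∈ G j,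
        D (m x y) = m x (D y) + pm K (d * (j + p)) • m (D x) y)
    ↔
    (∀ i j : ZMod 2, ∀ X ∈ G i, ∀ Y ∈ G j,
        m (E X) (E Y) = E (m (E X) Y + pm K (d * (j + d + p)) • m X (E Y))) := by
  have hED' : ∀ v, E (D v) = v := fun v => congrArg (· v) hED
  have hDE' : ∀ v, D (E v) = v := fun v => congrArg (· v) hDE
  constructor
  · intro h i j X hX Y hY
    have hx := hEg i X hX
    have hy := hEg j Y hY
    have := h (i + d) (j + d) (E X) hx (E Y) hy
    rw [hDE' X, hDE' Y] at this
    rw [← this, hED']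
  · intro h i j x hx y hy
    have hX := hDg i x hx
    have hY := hDg j y hy
    have := h (i + d) (j + d) (D x) hX (D y) hY
    rw [hED' x, hED' y] at this
    have hdd : d + d = 0 := by fin_cases d <;> decide
    have hjd : j + d + d = j := by rw [add_assoc, hdd, add_zero]
    rw [hjd] at this
    rw [this, hDE']
end
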